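/- arXiv:1908.01241 — 2 statements merged into one kernel-verified Lean document; each statement's English description precedes it below -/
import Mathlib

section
/- Let X_1, ..., X_n be i.i.d. random variables taking values in a set 𝒳, and let g : 𝒳 × 𝒳 → ℝ be a symmetric function with ‖g‖_∞ ≤ b for some b > 0. Define the U-statistic U = (1/C(n,2)) ∑_{1 ≤ i < j ≤ n} g(X_i, X_j). Then for all t > 0, P(|U − E[U]| > t) ≤ 2 exp(−n t² / (8 b²)). -/
open MeasureTheory ProbabilityTheory
open Real Finset

lemma hoeffding_core {p : ℝ} (hp0 : 0 ≤ p) (hp1 : p ≤ 1) (u : ℝ) :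
    p * exp u + (1 - p) * exp (-u) ≤ exp ((2*p - 1) * u + u^2 / 2) := by
  set h : ℝ → ℝ := fun v => p * exp v + (1 - p) * exp (-v) with hh_def
  have hpos : ∀ v, 0 < h v := by
    intro v
    have h1 := exp_pos v
    have h2 := exp_pos (-v)
    rcases le_total (exp v) (exp (-v)) with hc | hc <;> simp only [hh_def] <;> nlinarith
  have hone : ∀ v, exp v * exp (-v) = 1 := by
    intro v; rw [← Real.exp_add]; simp
  set h' : ℝ → ℝ := fun v => p * exp v - (1 - p) * exp (-v) with hh'_def
  have hdh : ∀ v, HasDerivAt h (h' v) v := by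
    intro v
    have e1 : HasDerivAt (fun v : ℝ => exp v) (exp v) v := Real.hasDerivAt_exp v
    have e2 : HasDerivAt (fun v : ℝ => exp (-v)) (-exp (-v)) v := by
      simpa [Function.comp_def] using ((Real.hasDerivAt_exp (-v)).comp v (hasDerivAt_neg v))
    have := (e1.const_mul p).add (e2.const_mul (1 - p))
    exact this.congr_deriv (by simp only [hh'_def]; ring)
  have hdh' : ∀ v, HasDerivAt h' (h v) v := by
    intro v
    have e1 : HasDerivAt (fun v : ℝ => exp v) (exp v) v := Real.hasDerivAt_exp v
    have e2 : HasDerivAt (fun v : ℝ => exp (-v)) (-exp (-v)) v := by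
      simpa [Function.comp_def] using ((Real.hasDerivAt_exp (-v)).comp v (hasDerivAt_neg v))
    have := (e1.const_mul p).sub (e2.const_mul (1 - p))
    exact this.congr_deriv (by simp only [hh_def]; ring)
  set φ : ℝ → ℝ := fun v => (2*p - 1) + v - h' v / h v with hφ_def
  set G : ℝ → ℝ := fun v => (2*p - 1) * v + v^2/2 - log (h v) with hG_def
  have hdG : ∀ v, HasDerivAt G (φ v) v := by
    intro v
    have l1 : HasDerivAt (fun v : ℝ => (2*p - 1) * v) (2*p - 1) v := by
      simpa using (hasDerivAt_id v).const_mul (2*p - 1)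
    have l2 : HasDerivAt (fun v : ℝ => v^2/2) v v := by
      have := ((hasDerivAt_pow 2 v).div_const 2)
      simpa using this
    have l3 : HasDerivAt (fun v => log (h v)) (h' v / h v) v := by
      have := (Real.hasDerivAt_log (hpos v).ne').comp v (hdh v)
      simpa [div_eq_inv_mul, Function.comp_def] using this
    exact (l1.add l2).sub l3
  have hsq : ∀ v, 4 * p * (1 - p) ≤ (h v)^2 := by
    intro v
    have h1 := hone v
    have h2 := sq_nonneg (p * exp v - (1 - p) * exp (-v))
    simp only [hh_def]; nlinarith
  have hdφ : ∀ v, HasDerivAt φ (1 - (4 * p * (1 - p)) / (h v)^2) v := by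
    intro v
    have l3 : HasDerivAt (fun v => h' v / h v) ((h v * h v - h' v * h' v) / (h v)^2) v :=
      (hdh' v).div (hdh v) (hpos v).ne'
    have key : (h v * h v - h' v * h' v) = 4 * p * (1 - p) := by
      have h1 := hone v
      simp only [hh_def, hh'_def]; nlinarith
    rw [key] at l3
    have := ((hasDerivAt_const v (2*p-1)).add (hasDerivAt_id v)).sub l3
    rw [zero_add] at this
    exact this
  have hφmono : Monotone φ := by
    apply monotone_of_deriv_nonneg
    · exact fun v => (hdφ v).differentiableAt
    · intro v
      rw [(hdφ v).deriv]
      have := hsq v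
      have hp2 : (0:ℝ) < (h v)^2 := pow_pos (hpos v) 2
      have : 4 * p * (1 - p) / (h v)^2 ≤ 1 := by
        rw [div_le_one hp2]; linarith
      linarith
  have hφ0 : φ 0 = 0 := by
    simp only [hφ_def, hh_def, hh'_def]
    norm_num
    ring
  have hGmono : MonotoneOn G (Set.Ici 0) := by
    apply monotoneOn_of_deriv_nonneg (convex_Ici 0)
    · exact (fun v _ => ((hdG v).differentiableAt).continuousAt.continuousWithinAt)
    · intro v hv; exact ((hdG v).differentiableAt).differentiableWithinAt
    · intro v hv
      rw [(hdG v).deriv]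
      rw [interior_Ici] at hv
      have : φ 0 ≤ φ v := hφmono (le_of_lt hv)
      linarith [hφ0 ▸ this]
  have hGanti : AntitoneOn G (Set.Iic 0) := by
    apply antitoneOn_of_deriv_nonpos (convex_Iic 0)
    · exact (fun v _ => ((hdG v).differentiableAt).continuousAt.continuousWithinAt)
    · intro v hv; exact ((hdG v).differentiableAt).differentiableWithinAt
    · intro v hv
      rw [(hdG v).deriv]
      rw [interior_Iic] at hv
      have : φ v ≤ φ 0 := hφmono (le_of_lt hv)
      linarith [hφ0 ▸ this]
  have hG0 : G 0 = 0 := by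
    simp only [hG_def, hh_def]
    norm_num
  have hGnn : 0 ≤ G u := by
    rcases le_total 0 u with hu | hu
    · have := hGmono (Set.self_mem_Ici) (Set.mem_Ici.mpr hu) hu
      rwa [hG0] at this
    · have := hGanti (Set.mem_Iic.mpr hu) (Set.self_mem_Iic) hu
      rwa [hG0] at this
  have : log (h u) ≤ (2*p - 1) * u + u^2/2 := by
    simp only [hG_def] at hGnn; linarith
  calc h u ≤ exp (log (h u)) := by rw [Real.exp_log (hpos u)]
    _ ≤ exp ((2*p - 1) * u + u^2/2) := exp_le_exp.mpr this

lemma mgf_aux {Ω : Type*} [MeasurableSpace Ω] (μ : Measure Ω) [IsProbabilityMeasure μ]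
    (Y : Ω → ℝ) (hY : Measurable Y) (b : ℝ) (hb : 0 < b) (hYb : ∀ ω, |Y ω| ≤ b) (s : ℝ) :
    ∫ ω, exp (s * Y ω) ∂μ ≤ exp (s * (∫ ω, Y ω ∂μ) + s^2 * b^2 / 2) := by
  have hYint : Integrable Y μ := by
    refine (integrable_const b).mono' hY.aestronglyMeasurable ?_
    exact Filter.Eventually.of_forall (fun ω => by simpa using hYb ω)
  have hexpint : Integrable (fun ω => exp (s * Y ω)) μ := by
    refine (integrable_const (exp (|s| * b))).mono'
      ((hY.const_mul s).exp).aestronglyMeasurable ?_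
    refine Filter.Eventually.of_forall (fun ω => ?_)
    rw [Real.norm_eq_abs, abs_of_pos (exp_pos _), exp_le_exp]
    calc s * Y ω ≤ |s * Y ω| := le_abs_self _
      _ = |s| * |Y ω| := abs_mul _ _
      _ ≤ |s| * b := by
          exact mul_le_mul_of_nonneg_left (hYb ω) (abs_nonneg s)
  set A := exp (s * b)
  set B := exp (-(s * b))
  have hpt : ∀ ω, exp (s * Y ω) ≤ (A - B)/(2*b) * Y ω + (A + B)/2 := by
    intro ω
    have h1 : |Y ω| ≤ b := hYb ω
    have ha : 0 ≤ (b + Y ω)/(2*b) := by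
      apply div_nonneg; · have := neg_le_of_abs_le h1; linarith
      linarith
    have hb' : 0 ≤ (b - Y ω)/(2*b) := by
      apply div_nonneg; · have := le_of_abs_le h1; linarith
      linarith
    have hab : (b + Y ω)/(2*b) + (b - Y ω)/(2*b) = 1 := by
      field_simp
      ring
    have := convexOn_exp.2 (Set.mem_univ (s*b)) (Set.mem_univ (-(s*b))) ha hb' hab
    simp only [smul_eq_mul] at this
    have harg : (b + Y ω)/(2*b) * (s*b) + (b - Y ω)/(2*b) * (-(s*b)) = s * Y ω := by
      field_simp; ring
    rw [harg] at this
    calc exp (s * Y ω) ≤ (b + Y ω)/(2*b) * A + (b - Y ω)/(2*b) * B := this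
      _ = (A - B)/(2*b) * Y ω + (A + B)/2 := by field_simp; ring
  have hint : ∫ ω, exp (s * Y ω) ∂μ ≤ (A - B)/(2*b) * (∫ ω, Y ω ∂μ) + (A + B)/2 := by
    have : ∫ ω, ((A - B)/(2*b) * Y ω + (A + B)/2) ∂μ
        = (A - B)/(2*b) * (∫ ω, Y ω ∂μ) + (A + B)/2 := by
      rw [integral_add (hYint.const_mul _) (integrable_const _), MeasureTheory.integral_const_mul,
        integral_const]
      simp
    rw [← this]
    exact integral_mono hexpint ((hYint.const_mul _).add (integrable_const _))
      (fun ω => hpt ω)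
  set e0 := ∫ ω, Y ω ∂μ with he0
  have he0b : |e0| ≤ b := by
    calc |e0| ≤ ∫ ω, |Y ω| ∂μ := by
          simpa using MeasureTheory.norm_integral_le_integral_norm (μ := μ) Y
      _ ≤ ∫ _ω, b ∂μ := integral_mono hYint.abs (integrable_const _) (fun ω => hYb ω)
      _ = b := by simp
  set p := (b + e0)/(2*b) with hp
  have hp0 : 0 ≤ p := by
    apply div_nonneg; · have := neg_le_of_abs_le he0b; linarith
    linarith
  have hp1 : p ≤ 1 := by
    rw [div_le_one (by linarith)]
    have := le_of_abs_le he0b; linarith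
  have hkey := hoeffding_core hp0 hp1 (s * b)
  have heq1 : p * A + (1-p) * B = (A - B)/(2*b) * e0 + (A + B)/2 := by
    simp only [hp]; field_simp; ring
  have heq2 : (2*p - 1) * (s*b) + (s*b)^2/2 = s * e0 + s^2 * b^2/2 := by
    simp only [hp]; field_simp; ring
  rw [heq1, heq2] at hkey
  exact hint.trans hkey

lemma integrable_exp_of_bound {Ω : Type*} [MeasurableSpace Ω] (μ : Measure Ω)
    [IsProbabilityMeasure μ] {W : Ω → ℝ} (hW : Measurable W) {M : ℝ}
    (hWb : ∀ ω, |W ω| ≤ M) (s : ℝ) : Integrable (fun ω => exp (s * W ω)) μ := by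
  refine (integrable_const (exp (|s| * M))).mono'
    ((hW.const_mul s).exp).aestronglyMeasurable ?_
  refine Filter.Eventually.of_forall (fun ω => ?_)
  rw [Real.norm_eq_abs, abs_of_pos (exp_pos _), exp_le_exp]
  calc s * W ω ≤ |s * W ω| := le_abs_self _
    _ = |s| * |W ω| := abs_mul _ _
    _ ≤ |s| * M := mul_le_mul_of_nonneg_left (hWb ω) (abs_nonneg s)

lemma meas_pair {ι 𝒳 : Type*} [MeasurableSpace 𝒳] (g : 𝒳 → 𝒳 → ℝ)
    (hg : Measurable (Function.uncurry g)) (i j : ι) :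
    Measurable fun v : ι → 𝒳 => g (v i) (v j) := by
  have h : (fun v : ι → 𝒳 => g (v i) (v j))
      = Function.uncurry g ∘ (fun v => (v i, v j)) := rfl
  rw [h]
  exact hg.comp ((measurable_pi_apply _).prodMk (measurable_pi_apply _))

lemma exp_sum_prod {Ω 𝒳 : Type*} [MeasurableSpace Ω] [MeasurableSpace 𝒳]
    (μ : Measure Ω) [IsProbabilityMeasure μ] {n : ℕ} (X : Fin n → Ω → 𝒳)
    (hmeas : ∀ i, Measurable (X i))
    (hindep : iIndepFun X μ)
    (g : 𝒳 → 𝒳 → ℝ) (hgmeas : Measurable (Function.uncurry g))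
    (b : ℝ) (hb : 0 < b) (hgb : ∀ x y, |g x y| ≤ b)
    {m : ℕ} (a c : Fin m → Fin n)
    (hdisj : ∀ i j, i ≠ j → a i ≠ a j ∧ a i ≠ c j ∧ c i ≠ a j ∧ c i ≠ c j)
    (s : ℝ) (t : Finset (Fin m)) :
    ∫ ω, exp (s * ∑ i ∈ t, g (X (a i) ω) (X (c i) ω)) ∂μ
      = ∏ i ∈ t, ∫ ω, exp (s * g (X (a i) ω) (X (c i) ω)) ∂μ := by
  classical
  have hYmeas : ∀ i : Fin m, Measurable (fun ω => g (X (a i) ω) (X (c i) ω)) :=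
    fun i => hgmeas.comp ((hmeas (a i)).prodMk (hmeas (c i)))
  induction t using Finset.induction_on with
  | empty => simp
  | insert j t hj ih =>
    simp only [Finset.sum_insert hj, Finset.prod_insert hj]
    set S : Finset (Fin n) := {a j, c j} with hS
    set T : Finset (Fin n) := t.biUnion (fun i => {a i, c i}) with hT
    have hST : Disjoint S T := by
      rw [Finset.disjoint_left]
      intro x hxS hxT
      rw [hT, Finset.mem_biUnion] at hxT
      obtain ⟨i, hit, hxi⟩ := hxT
      have hij : j ≠ i := fun h => hj (h ▸ hit)
      have h4 := hdisj j i hij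
      rw [hS, Finset.mem_insert, Finset.mem_singleton] at hxS
      rw [Finset.mem_insert, Finset.mem_singleton] at hxi
      rcases hxS with h | h <;> rcases hxi with h' | h' <;> subst h <;> tauto
    have hbase := hindep.indepFun_finset S T hST hmeas
    have hajS : a j ∈ S := by simp [hS]
    have hcjS : c j ∈ S := by simp [hS]
    set φ : (S → 𝒳) → ℝ := fun v => exp (s * g (v ⟨a j, hajS⟩) (v ⟨c j, hcjS⟩)) with hφ
    set ψ : (T → 𝒳) → ℝ := fun v => exp (s * ∑ i ∈ t.attach,
      g (v ⟨a i.1, by rw [hT, Finset.mem_biUnion]; exact ⟨i.1, i.2, by simp⟩⟩)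
        (v ⟨c i.1, by rw [hT, Finset.mem_biUnion]; exact ⟨i.1, i.2, by simp⟩⟩)) with hψ
    have hφm : Measurable φ := by
      apply Measurable.exp
      apply Measurable.const_mul
      exact meas_pair g hgmeas _ _
    have hψm : Measurable ψ := by
      apply Measurable.exp
      apply Measurable.const_mul
      exact Finset.measurable_sum _ (fun i _ =>
        meas_pair g hgmeas _ _)
    have hIF : IndepFun (fun ω => exp (s * g (X (a j) ω) (X (c j) ω)))
        (fun ω => exp (s * ∑ i ∈ t, g (X (a i) ω) (X (c i) ω))) μ := by
      have := hbase.comp hφm hψm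
      have heq1 : (φ ∘ fun ω (i : S) => X i ω)
          = fun ω => exp (s * g (X (a j) ω) (X (c j) ω)) := rfl
      have heq2 : (ψ ∘ fun ω (i : T) => X i ω)
          = fun ω => exp (s * ∑ i ∈ t, g (X (a i) ω) (X (c i) ω)) := by
        funext ω
        simp only [Function.comp_apply, hψ]
        congr 1
        rw [← Finset.sum_attach t (fun i => g (X (a i) ω) (X (c i) ω))]
      rwa [heq1, heq2] at this
    have hint1 : Integrable (fun ω => exp (s * g (X (a j) ω) (X (c j) ω))) μ :=
      integrable_exp_of_bound μ (hYmeas j) (fun ω => hgb _ _) s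
    have hint2 : Integrable (fun ω => exp (s * ∑ i ∈ t, g (X (a i) ω) (X (c i) ω))) μ := by
      refine integrable_exp_of_bound μ (Finset.measurable_sum _ (fun i _ => hYmeas i))
        (M := (t.card : ℝ) * b) (fun ω => ?_) s
      calc |∑ i ∈ t, g (X (a i) ω) (X (c i) ω)| ≤ ∑ i ∈ t, |g (X (a i) ω) (X (c i) ω)| :=
            Finset.abs_sum_le_sum_abs _ _
        _ ≤ ∑ _i ∈ t, b := Finset.sum_le_sum (fun i _ => hgb _ _)
        _ = (t.card : ℝ) * b := by rw [Finset.sum_const, nsmul_eq_mul]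
    calc ∫ ω, exp (s * (g (X (a j) ω) (X (c j) ω) + ∑ i ∈ t, g (X (a i) ω) (X (c i) ω))) ∂μ
        = ∫ ω, (exp (s * g (X (a j) ω) (X (c j) ω))
            * exp (s * ∑ i ∈ t, g (X (a i) ω) (X (c i) ω))) ∂μ := by
          congr 1; funext ω; rw [← Real.exp_add]; ring_nf
      _ = (∫ ω, exp (s * g (X (a j) ω) (X (c j) ω)) ∂μ)
            * ∫ ω, exp (s * ∑ i ∈ t, g (X (a i) ω) (X (c i) ω)) ∂μ :=
          IndepFun.integral_mul_eq_mul_integral hIF hint1.aestronglyMeasurable hint2.aestronglyMeasurable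
      _ = _ := by rw [ih]

lemma perm_pair_congr {n : ℕ} (F : Fin n → Fin n → ℝ)
    {a b c d : Fin n} (hab : a ≠ b) (hcd : c ≠ d) :
    ∑ σ : Equiv.Perm (Fin n), F (σ a) (σ b) = ∑ σ : Equiv.Perm (Fin n), F (σ c) (σ d) := by
  set τ1 := Equiv.swap c a with hτ1
  set u := τ1 d with hu
  have hua : u ≠ a := by
    intro h
    have h2 : τ1 d = τ1 c := by
      rw [show τ1 c = a from Equiv.swap_apply_left c a, ← h, hu]
    exact hcd (τ1.injective h2).symm
  set τ2 := Equiv.swap u b with hτ2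
  set τ : Equiv.Perm (Fin n) := τ1.trans τ2 with hτ
  have hτc : τ c = a := by
    simp only [hτ, Equiv.trans_apply, hτ1, Equiv.swap_apply_left, hτ2]
    exact Equiv.swap_apply_of_ne_of_ne (Ne.symm hua) hab
  have hτd : τ d = b := by
    simp only [hτ, Equiv.trans_apply, ← hu, hτ2, Equiv.swap_apply_left]
  refine Fintype.sum_equiv (Equiv.mulRight τ) _ _ (fun σ => ?_)
  simp only [Equiv.coe_mulRight, Equiv.Perm.mul_apply, hτc, hτd]

lemma perm_pair_sum {n : ℕ} (hn : 2 ≤ n) (F : Fin n → Fin n → ℝ) (hF : ∀ x y, F x y = F y x)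
    {a b : Fin n} (hab : a ≠ b) :
    ((n:ℝ) * ((n:ℝ) - 1)) * ∑ σ : Equiv.Perm (Fin n), F (σ a) (σ b)
      = (n.factorial : ℝ) *
        (2 * ∑ p ∈ Finset.univ.filter (fun p : Fin n × Fin n => p.1 < p.2), F p.1 p.2) := by
  classical
  -- rewrite sums over filters as sums of ite over univ
  have hsum_ite : ∀ (G : Fin n × Fin n → Prop) [DecidablePred G] (f : Fin n × Fin n → ℝ),
      ∑ p ∈ Finset.univ.filter G, f p = ∑ p : Fin n × Fin n, if G p then f p else 0 :=
    fun G _ f => (Finset.sum_filter G f)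
  -- Step A: each σ-sum over the off-diagonal is invariant
  have stepA : ∀ σ : Equiv.Perm (Fin n),
      (∑ p : Fin n × Fin n, if p.1 ≠ p.2 then F (σ p.1) (σ p.2) else 0)
        = ∑ p : Fin n × Fin n, if p.1 ≠ p.2 then F p.1 p.2 else 0 := by
    intro σ
    refine Fintype.sum_equiv (Equiv.prodCongr σ σ) _ _ (fun p => ?_)
    simp only [Equiv.prodCongr_apply, Prod.map]
    by_cases h : p.1 ≠ p.2
    · rw [if_pos h, if_pos (fun hc => h (σ.injective hc))]
    · rw [if_neg h, if_neg (by simpa using h)]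
  -- Step B: all pair sums are equal, so summing over off-diagonal pairs counts them
  have cardD : (∑ p : Fin n × Fin n, if p.1 ≠ p.2 then (1:ℝ) else 0)
      = (n:ℝ) * ((n:ℝ) - 1) := by
    rw [← hsum_ite]
    rw [Finset.sum_const, nsmul_eq_mul, mul_one]
    have : Finset.univ.filter (fun p : Fin n × Fin n => p.1 ≠ p.2) = Finset.univ.offDiag := by
      ext p; simp [Finset.mem_offDiag]
    rw [this, Finset.offDiag_card]
    simp only [Finset.card_univ, Fintype.card_fin]
    push_cast [Nat.cast_sub (by nlinarith : n ≤ n * n)]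
    ring
  have stepB : (∑ p : Fin n × Fin n, if p.1 ≠ p.2 then
        (∑ σ : Equiv.Perm (Fin n), F (σ p.1) (σ p.2)) else 0)
      = ((n:ℝ) * ((n:ℝ) - 1)) * ∑ σ : Equiv.Perm (Fin n), F (σ a) (σ b) := by
    have : ∀ p : Fin n × Fin n, (if p.1 ≠ p.2 then
        (∑ σ : Equiv.Perm (Fin n), F (σ p.1) (σ p.2)) else 0)
        = (if p.1 ≠ p.2 then (1:ℝ) else 0) * ∑ σ : Equiv.Perm (Fin n), F (σ a) (σ b) := by
      intro p
      by_cases h : p.1 ≠ p.2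
      · rw [if_pos h, if_pos h, one_mul, perm_pair_congr F h hab]
      · rw [if_neg h, if_neg h, zero_mul]
    rw [Finset.sum_congr rfl (fun p _ => this p), ← Finset.sum_mul, cardD]
  -- Step C: swap order of summation
  have stepC : (∑ p : Fin n × Fin n, if p.1 ≠ p.2 then
        (∑ σ : Equiv.Perm (Fin n), F (σ p.1) (σ p.2)) else 0)
      = (n.factorial : ℝ) * ∑ p : Fin n × Fin n, if p.1 ≠ p.2 then F p.1 p.2 else 0 := by
    have h1 : ∀ p : Fin n × Fin n, (if p.1 ≠ p.2 then
        (∑ σ : Equiv.Perm (Fin n), F (σ p.1) (σ p.2)) else 0)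
        = ∑ σ : Equiv.Perm (Fin n), if p.1 ≠ p.2 then F (σ p.1) (σ p.2) else 0 := by
      intro p
      by_cases h : p.1 ≠ p.2
      · simp [h]
      · simp [h]
    rw [Finset.sum_congr rfl (fun p _ => h1 p), Finset.sum_comm]
    rw [Finset.sum_congr rfl (fun σ _ => stepA σ), Finset.sum_const, nsmul_eq_mul]
    congr 1
    simp [Fintype.card_perm, Fintype.card_fin]
  -- Step D: off-diagonal sum = twice the sum over increasing pairs
  have stepD : (∑ p : Fin n × Fin n, if p.1 ≠ p.2 then F p.1 p.2 else 0)
      = 2 * ∑ p ∈ Finset.univ.filter (fun p : Fin n × Fin n => p.1 < p.2), F p.1 p.2 := by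
    rw [hsum_ite]
    have hsplit : ∀ p : Fin n × Fin n, (if p.1 ≠ p.2 then F p.1 p.2 else 0)
        = (if p.1 < p.2 then F p.1 p.2 else 0) + (if p.2 < p.1 then F p.1 p.2 else 0) := by
      intro p
      rcases lt_trichotomy p.1 p.2 with h | h | h
      · rw [if_pos h.ne, if_pos h, if_neg (by omega), add_zero]
      · rw [if_neg (by simp [h]), if_neg (by omega), if_neg (by omega), add_zero]
      · rw [if_pos h.ne', if_neg (by omega), if_pos h, zero_add]
    rw [Finset.sum_congr rfl (fun p _ => hsplit p), Finset.sum_add_distrib]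
    have hswap : (∑ p : Fin n × Fin n, if p.2 < p.1 then F p.1 p.2 else 0)
        = ∑ p : Fin n × Fin n, if p.1 < p.2 then F p.1 p.2 else 0 := by
      refine Fintype.sum_equiv (Equiv.prodComm _ _) _ _ (fun p => ?_)
      simp only [Equiv.prodComm_apply, Prod.swap]
      by_cases h : p.2 < p.1
      · rw [if_pos h]; simp only [h, ↓reduceIte]; exact hF _ _
      · rw [if_neg h]; simp only [h, ↓reduceIte]
    rw [hswap]
    ring
  rw [← stepB, stepC, stepD]

set_option maxHeartbeats 2000000 in
lemma one_side {Ω 𝒳 : Type*} [MeasurableSpace Ω] [MeasurableSpace 𝒳]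
    (μ : Measure Ω) [IsProbabilityMeasure μ]
    (n : ℕ) (hn : 2 ≤ n) (X : Fin n → Ω → 𝒳)
    (hmeas : ∀ i, Measurable (X i))
    (hindep : iIndepFun X μ)
    (hident : ∀ i j, Measure.map (X i) μ = Measure.map (X j) μ)
    (g : 𝒳 → 𝒳 → ℝ) (hgmeas : Measurable (Function.uncurry g))
    (hgsym : ∀ x y, g x y = g y x)
    (b : ℝ) (hb : 0 < b) (hgb : ∀ x y, |g x y| ≤ b)
    (t : ℝ) (ht : 0 < t) :
    (μ {ω | t ≤ (1 / (n.choose 2 : ℝ)) *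
              (∑ p ∈ Finset.univ.filter (fun p : Fin n × Fin n => p.1 < p.2),
                g (X p.1 ω) (X p.2 ω))
            - ∫ ω', (1 / (n.choose 2 : ℝ)) *
                (∑ p ∈ Finset.univ.filter (fun p : Fin n × Fin n => p.1 < p.2),
                  g (X p.1 ω') (X p.2 ω')) ∂μ}).toReal
      ≤ Real.exp (-(n : ℝ) * t ^ 2 / (8 * b ^ 2)) := by
  classical
  set m : ℕ := n / 2 with hm_def
  have hm1 : 1 ≤ m := by omega
  have hmn : 2 * m ≤ n := by omega
  -- index maps
  set a : Fin m → Fin n := fun i => ⟨2 * i.1, by have := i.2; omega⟩ with ha_def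
  set c : Fin m → Fin n := fun i => ⟨2 * i.1 + 1, by have := i.2; omega⟩ with hc_def
  have hac : ∀ i, a i ≠ c i := by
    intro i h
    have := congrArg Fin.val h
    simp [ha_def, hc_def] at this
  have hdisj : ∀ i j, i ≠ j → a i ≠ a j ∧ a i ≠ c j ∧ c i ≠ a j ∧ c i ≠ c j := by
    intro i j hij
    have hv : i.1 ≠ j.1 := fun h => hij (Fin.ext h)
    refine ⟨?_, ?_, ?_, ?_⟩ <;>
      · intro h
        have := congrArg Fin.val h
        simp only [ha_def, hc_def] at this
        omega
  -- basic objects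
  set P := Finset.univ.filter (fun p : Fin n × Fin n => p.1 < p.2) with hP_def
  set U : Ω → ℝ := fun ω => (1 / (n.choose 2 : ℝ)) * ∑ p ∈ P, g (X p.1 ω) (X p.2 ω)
    with hU_def
  have hNe : (0:ℝ) < (n.factorial : ℝ) := by positivity
  have hK : (0:ℝ) < (n:ℝ) * ((n:ℝ) - 1) := by
    have : (2:ℝ) ≤ (n:ℝ) := by exact_mod_cast hn
    nlinarith
  have hC : (n.choose 2 : ℝ) = (n:ℝ) * ((n:ℝ) - 1) / 2 := Nat.cast_choose_two (K := ℝ) n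
  have hCpos : (0:ℝ) < (n.choose 2 : ℝ) := by rw [hC]; linarith
  have hmR : (0:ℝ) < (m:ℝ) := by exact_mod_cast hm1
  -- the blocks
  set V : Equiv.Perm (Fin n) → Ω → ℝ :=
    fun σ ω => (1 / (m:ℝ)) * ∑ i : Fin m, g (X (σ (a i)) ω) (X (σ (c i)) ω) with hV_def
  set N := Fintype.card (Equiv.Perm (Fin n)) with hN_def
  have hNval : (N:ℝ) = (n.factorial : ℝ) := by
    rw [hN_def]; norm_cast; simp [Fintype.card_perm, Fintype.card_fin]
  have hNpos : (0:ℝ) < (N:ℝ) := by rw [hNval]; exact hNe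
  -- pointwise identity
  have hid : ∀ ω, U ω = (1 / (N:ℝ)) * ∑ σ : Equiv.Perm (Fin n), V σ ω := by
    intro ω
    set F : Fin n → Fin n → ℝ := fun x y => g (X x ω) (X y ω) with hF_def
    have hFsym : ∀ x y, F x y = F y x := fun x y => hgsym _ _
    have hkey : ∀ i : Fin m,
        ∑ σ : Equiv.Perm (Fin n), F (σ (a i)) (σ (c i))
          = (n.factorial : ℝ) * (2 * ∑ p ∈ P, F p.1 p.2) / ((n:ℝ) * ((n:ℝ) - 1)) := by
      intro i
      have := perm_pair_sum hn F hFsym (hac i)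
      rw [eq_div_iff hK.ne']
      linarith [this]
    have hswap : ∑ σ : Equiv.Perm (Fin n), V σ ω
        = (1 / (m:ℝ)) * ∑ i : Fin m, ∑ σ : Equiv.Perm (Fin n), F (σ (a i)) (σ (c i)) := by
      rw [hV_def]
      rw [← Finset.mul_sum]
      congr 1
      exact Finset.sum_comm
    rw [hswap]
    rw [Finset.sum_congr rfl (fun i _ => hkey i), Finset.sum_const, Finset.card_univ,
      Fintype.card_fin, nsmul_eq_mul]
    rw [hU_def, hC, hNval]
    field_simp
    rfl
  -- equal expectations of pair terms
  have hEeq : ∀ (x y : Fin n), x ≠ y →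
      ∫ ω, g (X x ω) (X y ω) ∂μ = ∫ ω, g (X (a ⟨0, hm1⟩) ω) (X (c ⟨0, hm1⟩) ω) ∂μ := by
    intro x y hxy
    have hmap : ∀ (u v : Fin n), u ≠ v →
        ∫ ω, g (X u ω) (X v ω) ∂μ
          = ∫ q, Function.uncurry g q ∂((Measure.map (X u) μ).prod (Measure.map (X v) μ)) := by
      intro u v huv
      have hjoint : Measure.map (fun ω => (X u ω, X v ω)) μ
          = (Measure.map (X u) μ).prod (Measure.map (X v) μ) :=
        (indepFun_iff_map_prod_eq_prod_map_map (hmeas u).aemeasurable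
          (hmeas v).aemeasurable).mp (hindep.indepFun huv)
      rw [← hjoint, integral_map ((hmeas u).prodMk (hmeas v)).aemeasurable
        hgmeas.aestronglyMeasurable]
      rfl
    rw [hmap x y hxy, hmap _ _ (hac ⟨0, hm1⟩), hident x (a ⟨0, hm1⟩), hident y (c ⟨0, hm1⟩)]
  set e0 : ℝ := ∫ ω, g (X (a ⟨0, hm1⟩) ω) (X (c ⟨0, hm1⟩) ω) ∂μ with he0_def
  have hFmeas : ∀ (x y : Fin n), Measurable (fun ω => g (X x ω) (X y ω)) :=
    fun x y => hgmeas.comp ((hmeas x).prodMk (hmeas y))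
  have hFint : ∀ (x y : Fin n), Integrable (fun ω => g (X x ω) (X y ω)) μ := by
    intro x y
    refine (integrable_const b).mono' (hFmeas x y).aestronglyMeasurable ?_
    exact Filter.Eventually.of_forall (fun ω => by simpa using hgb _ _)
  have he0b : |e0| ≤ b := by
    rw [he0_def]
    calc |∫ ω, g (X (a ⟨0, hm1⟩) ω) (X (c ⟨0, hm1⟩) ω) ∂μ|
        ≤ ∫ ω, |g (X (a ⟨0, hm1⟩) ω) (X (c ⟨0, hm1⟩) ω)| ∂μ := by
          simpa [Real.norm_eq_abs] using MeasureTheory.norm_integral_le_integral_norm (μ := μ)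
            (fun ω => g (X (a ⟨0, hm1⟩) ω) (X (c ⟨0, hm1⟩) ω))
      _ ≤ ∫ _ω, b ∂μ := integral_mono (hFint _ _).abs (integrable_const _)
          (fun ω => hgb _ _)
      _ = b := by simp
  -- V is bounded and integrable
  have hVb : ∀ σ ω, |V σ ω| ≤ b := by
    intro σ ω
    rw [hV_def]
    rw [abs_mul]
    have h1 : |∑ i : Fin m, g (X (σ (a i)) ω) (X (σ (c i)) ω)| ≤ (m:ℝ) * b := by
      calc |∑ i : Fin m, g (X (σ (a i)) ω) (X (σ (c i)) ω)|
          ≤ ∑ i : Fin m, |g (X (σ (a i)) ω) (X (σ (c i)) ω)| := Finset.abs_sum_le_sum_abs _ _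
        _ ≤ ∑ _i : Fin m, b := Finset.sum_le_sum (fun i _ => hgb _ _)
        _ = (m:ℝ) * b := by rw [Finset.sum_const, Finset.card_univ, Fintype.card_fin,
              nsmul_eq_mul]
    rw [abs_of_pos (by positivity : (0:ℝ) < 1 / (m:ℝ))]
    rw [div_mul_eq_mul_div, one_mul, div_le_iff₀ hmR]
    linarith
  have hVmeas : ∀ σ, Measurable (V σ) := by
    intro σ
    apply Measurable.const_mul
    exact Finset.measurable_sum _ (fun i _ => hFmeas _ _)
  have hVint : ∀ σ, Integrable (V σ) μ := by
    intro σ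
    refine (integrable_const b).mono' (hVmeas σ).aestronglyMeasurable ?_
    exact Filter.Eventually.of_forall (fun ω => by simpa using hVb σ ω)
  -- U bounded, measurable
  have hUb : ∀ ω, |U ω| ≤ b := by
    intro ω
    rw [hid ω, abs_mul, abs_of_pos (by positivity : (0:ℝ) < 1 / (N:ℝ))]
    have h1 : |∑ σ : Equiv.Perm (Fin n), V σ ω| ≤ (N:ℝ) * b := by
      calc |∑ σ : Equiv.Perm (Fin n), V σ ω| ≤ ∑ σ : Equiv.Perm (Fin n), |V σ ω| :=
            Finset.abs_sum_le_sum_abs _ _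
        _ ≤ ∑ _σ : Equiv.Perm (Fin n), b := Finset.sum_le_sum (fun σ _ => hVb σ _)
        _ = (N:ℝ) * b := by rw [Finset.sum_const, Finset.card_univ, nsmul_eq_mul, hN_def]
    rw [div_mul_eq_mul_div, one_mul, div_le_iff₀ hNpos]
    linarith
  have hUmeas : Measurable U := by
    apply Measurable.const_mul
    exact Finset.measurable_sum _ (fun p _ => hFmeas _ _)
  have hUint : Integrable U μ := by
    refine (integrable_const b).mono' hUmeas.aestronglyMeasurable ?_
    exact Filter.Eventually.of_forall (fun ω => by simpa using hUb ω)
  -- expectations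
  have hEV : ∀ σ, ∫ ω, V σ ω ∂μ = e0 := by
    intro σ
    rw [hV_def]
    simp only
    rw [integral_const_mul]
    rw [integral_finset_sum _ (fun i _ => hFint _ _)]
    have : ∀ i : Fin m, (i ∈ Finset.univ) →
        ∫ ω, g (X (σ (a i)) ω) (X (σ (c i)) ω) ∂μ = e0 := by
      intro i _
      rw [he0_def]
      apply hEeq
      intro h
      exact hac i (σ.injective h)
    rw [Finset.sum_congr rfl this, Finset.sum_const, Finset.card_univ, Fintype.card_fin,
      nsmul_eq_mul]
    field_simp
  have hEU : ∫ ω, U ω ∂μ = e0 := by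
    have h1 : ∫ ω, U ω ∂μ = ∫ ω, (1 / (N:ℝ)) * ∑ σ : Equiv.Perm (Fin n), V σ ω ∂μ := by
      apply integral_congr_ae
      exact Filter.Eventually.of_forall (fun ω => hid ω)
    rw [h1, integral_const_mul, integral_finset_sum _ (fun σ _ => hVint σ)]
    rw [Finset.sum_congr rfl (fun σ _ => hEV σ), Finset.sum_const, Finset.card_univ,
      nsmul_eq_mul, ← hN_def]
    field_simp
  -- Chernoff parameter
  set s : ℝ := (m:ℝ) * t / b^2 with hs_def
  have hs_pos : 0 < s := by positivity
  -- MGF bound for each V σ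
  have hmgfV : ∀ σ : Equiv.Perm (Fin n),
      ∫ ω, exp (s * (V σ ω - e0)) ∂μ ≤ exp (s^2 * b^2 / (2 * (m:ℝ))) := by
    intro σ
    have hprod : ∫ ω, exp (s * V σ ω) ∂μ
        = ∏ i : Fin m, ∫ ω, exp ((s / (m:ℝ)) * g (X (σ (a i)) ω) (X (σ (c i)) ω)) ∂μ := by
      have harg : ∀ ω, s * V σ ω
          = (s / (m:ℝ)) * ∑ i : Fin m, g (X (σ (a i)) ω) (X (σ (c i)) ω) := by
        intro ω; rw [hV_def]; field_simp
      rw [integral_congr_ae (Filter.Eventually.of_forall (fun ω => by rw [harg ω]))]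
      exact exp_sum_prod μ X hmeas hindep g hgmeas b hb hgb (fun i => σ (a i))
        (fun i => σ (c i))
        (fun i j hij => by
          obtain ⟨h1, h2, h3, h4⟩ := hdisj i j hij
          exact ⟨fun h => h1 (σ.injective h), fun h => h2 (σ.injective h),
            fun h => h3 (σ.injective h), fun h => h4 (σ.injective h)⟩)
        (s / (m:ℝ)) Finset.univ
    have hterm : ∀ i : Fin m,
        ∫ ω, exp ((s / (m:ℝ)) * g (X (σ (a i)) ω) (X (σ (c i)) ω)) ∂μ
          ≤ exp ((s / (m:ℝ)) * e0 + (s / (m:ℝ))^2 * b^2 / 2) := by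
      intro i
      have := mgf_aux μ (fun ω => g (X (σ (a i)) ω) (X (σ (c i)) ω)) (hFmeas _ _) b hb
        (fun ω => hgb _ _) (s / (m:ℝ))
      have hEi : ∫ ω, g (X (σ (a i)) ω) (X (σ (c i)) ω) ∂μ = e0 := by
        rw [he0_def]; exact hEeq _ _ (fun h => hac i (σ.injective h))
      rwa [hEi] at this
    have hsplit : ∀ ω, exp (s * (V σ ω - e0)) = exp (s * V σ ω) * exp (-(s * e0)) := by
      intro ω; rw [← Real.exp_add]; ring_nf
    calc ∫ ω, exp (s * (V σ ω - e0)) ∂μ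
        = (∫ ω, exp (s * V σ ω) ∂μ) * exp (-(s * e0)) := by
          rw [← integral_mul_const]
          exact integral_congr_ae (Filter.Eventually.of_forall (fun ω => hsplit ω))
      _ ≤ (∏ i : Fin m, exp ((s / (m:ℝ)) * e0 + (s / (m:ℝ))^2 * b^2 / 2)) * exp (-(s * e0)) := by
          rw [hprod]
          apply mul_le_mul_of_nonneg_right _ (exp_pos _).le
          apply Finset.prod_le_prod
          · intro i _
            apply integral_nonneg
            intro ω; positivity
          · intro i _; exact hterm i
      _ = exp (s^2 * b^2 / (2 * (m:ℝ))) := by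
          rw [Finset.prod_const, Finset.card_univ, Fintype.card_fin, ← Real.exp_nat_mul,
            ← Real.exp_add]
          congr 1
          field_simp
          ring
  -- MGF bound for U via Jensen
  have hmgfU : ∫ ω, exp (s * (U ω - e0)) ∂μ ≤ exp (s^2 * b^2 / (2 * (m:ℝ))) := by
    have hJ : ∀ ω, exp (s * (U ω - e0))
        ≤ ∑ σ : Equiv.Perm (Fin n), (1 / (N:ℝ)) * exp (s * (V σ ω - e0)) := by
      intro ω
      have harg : s * (U ω - e0)
          = ∑ σ : Equiv.Perm (Fin n), (1 / (N:ℝ)) • (s * (V σ ω - e0)) := by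
        simp only [smul_eq_mul]
        rw [← Finset.mul_sum]
        have : ∑ σ : Equiv.Perm (Fin n), (s * (V σ ω - e0))
            = s * ((∑ σ : Equiv.Perm (Fin n), V σ ω) - (N:ℝ) * e0) := by
          rw [Finset.sum_congr rfl (fun σ _ => by ring : ∀ σ ∈ Finset.univ,
            s * (V σ ω - e0) = s * V σ ω - s * e0), Finset.sum_sub_distrib, ← Finset.mul_sum,
            Finset.sum_const, Finset.card_univ, nsmul_eq_mul, ← hN_def]
          ring
        rw [this, hid ω]
        field_simp
      rw [harg]
      exact convexOn_exp.map_sum_le (fun σ _ => by positivity)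
        (by rw [Finset.sum_const, Finset.card_univ, nsmul_eq_mul, ← hN_def]; field_simp)
        (fun σ _ => Set.mem_univ _)
    have hintL : Integrable (fun ω => exp (s * (U ω - e0))) μ :=
      integrable_exp_of_bound μ (hUmeas.sub measurable_const) (M := b + |e0|)
        (fun ω => by
          have := hUb ω
          have h2 := abs_sub (U ω) e0
          calc |U ω - e0| ≤ |U ω| + |e0| := abs_sub _ _
            _ ≤ b + |e0| := by linarith) s
    have hintR : ∀ σ, Integrable (fun ω => exp (s * (V σ ω - e0))) μ := fun σ =>
      integrable_exp_of_bound μ ((hVmeas σ).sub measurable_const) (M := b + |e0|)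
        (fun ω => by
          calc |V σ ω - e0| ≤ |V σ ω| + |e0| := abs_sub _ _
            _ ≤ b + |e0| := by linarith [hVb σ ω]) s
    calc ∫ ω, exp (s * (U ω - e0)) ∂μ
        ≤ ∫ ω, ∑ σ : Equiv.Perm (Fin n), (1 / (N:ℝ)) * exp (s * (V σ ω - e0)) ∂μ := by
          apply integral_mono hintL _ hJ
          exact integrable_finset_sum _ (fun σ _ => (hintR σ).const_mul _)
      _ = ∑ σ : Equiv.Perm (Fin n), (1 / (N:ℝ)) * ∫ ω, exp (s * (V σ ω - e0)) ∂μ := by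
          rw [integral_finset_sum _ (fun σ _ => (hintR σ).const_mul _)]
          exact Finset.sum_congr rfl (fun σ _ => integral_const_mul _ _)
      _ ≤ ∑ σ : Equiv.Perm (Fin n), (1 / (N:ℝ)) * exp (s^2 * b^2 / (2 * (m:ℝ))) := by
          apply Finset.sum_le_sum
          intro σ _
          exact mul_le_mul_of_nonneg_left (hmgfV σ) (by positivity)
      _ = exp (s^2 * b^2 / (2 * (m:ℝ))) := by
          rw [Finset.sum_const, Finset.card_univ, nsmul_eq_mul, ← hN_def]
          field_simp
  -- Chernoff bound
  have hintC : Integrable (fun ω => exp (s * (U ω - e0))) μ :=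
    integrable_exp_of_bound μ (hUmeas.sub measurable_const) (M := b + |e0|)
      (fun ω => by
        calc |U ω - e0| ≤ |U ω| + |e0| := abs_sub _ _
          _ ≤ b + |e0| := by linarith [hUb ω]) s
  have hchern := measure_ge_le_exp_mul_mgf (μ := μ) (X := fun ω => U ω - e0) t hs_pos.le hintC
  have hmgf_eq : mgf (fun ω => U ω - e0) μ s = ∫ ω, exp (s * (U ω - e0)) ∂μ := by
    rw [mgf]
  have hfinal : (μ {ω | t ≤ U ω - e0}).toReal ≤ exp (-(n:ℝ) * t^2 / (8 * b^2)) := by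
    refine hchern.trans ?_
    rw [hmgf_eq]
    calc exp (-s * t) * ∫ ω, exp (s * (U ω - e0)) ∂μ
        ≤ exp (-s * t) * exp (s^2 * b^2 / (2 * (m:ℝ))) :=
          mul_le_mul_of_nonneg_left hmgfU (exp_pos _).le
      _ = exp (-s * t + s^2 * b^2 / (2 * (m:ℝ))) := by rw [← Real.exp_add]
      _ ≤ exp (-(n:ℝ) * t^2 / (8 * b^2)) := by
          rw [exp_le_exp]
          have hsv : -s * t + s^2 * b^2 / (2 * (m:ℝ)) = -(m:ℝ) * t^2 / (2 * b^2) := by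
            rw [hs_def]; field_simp; ring
          rw [hsv]
          rw [div_le_div_iff₀ (by positivity) (by positivity)]
          have h4m : (n:ℝ) ≤ 4 * (m:ℝ) := by
            have : n ≤ 4 * m := by omega
            exact_mod_cast this
          nlinarith [mul_le_mul_of_nonneg_right h4m
            (mul_nonneg (sq_nonneg t) (sq_nonneg b))]
  -- rewrite goal
  have hgoal_eq : {ω | t ≤ (1 / (n.choose 2 : ℝ)) *
              (∑ p ∈ Finset.univ.filter (fun p : Fin n × Fin n => p.1 < p.2),
                g (X p.1 ω) (X p.2 ω))
            - ∫ ω', (1 / (n.choose 2 : ℝ)) *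
                (∑ p ∈ Finset.univ.filter (fun p : Fin n × Fin n => p.1 < p.2),
                  g (X p.1 ω') (X p.2 ω')) ∂μ}
      = {ω | t ≤ U ω - e0} := by
    have : (∫ ω', (1 / (n.choose 2 : ℝ)) *
        (∑ p ∈ Finset.univ.filter (fun p : Fin n × Fin n => p.1 < p.2),
          g (X p.1 ω') (X p.2 ω')) ∂μ) = e0 := hEU
    rw [this]
  rw [hgoal_eq]
  exact hfinal

theorem stmt_5 {Ω 𝒳 : Type*} [MeasurableSpace Ω] [MeasurableSpace 𝒳]
    (μ : Measure Ω) [IsProbabilityMeasure μ]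
    (n : ℕ) (hn : 2 ≤ n) (X : Fin n → Ω → 𝒳)
    (hmeas : ∀ i, Measurable (X i))
    (hindep : iIndepFun X μ)
    (hident : ∀ i j, Measure.map (X i) μ = Measure.map (X j) μ)
    (g : 𝒳 → 𝒳 → ℝ) (hgmeas : Measurable (Function.uncurry g))
    (hgsym : ∀ x y, g x y = g y x)
    (b : ℝ) (hb : 0 < b) (hgb : ∀ x y, |g x y| ≤ b) :
    ∀ t : ℝ, 0 < t →
      μ {ω | t <
          |(1 / (n.choose 2 : ℝ)) *
              ∑ p ∈ Finset.univ.filter (fun p : Fin n × Fin n => p.1 < p.2),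
                g (X p.1 ω) (X p.2 ω)
            - ∫ ω', (1 / (n.choose 2 : ℝ)) *
                ∑ p ∈ Finset.univ.filter (fun p : Fin n × Fin n => p.1 < p.2),
                  g (X p.1 ω') (X p.2 ω') ∂μ|}
        ≤ ENNReal.ofReal (2 * Real.exp (-(n : ℝ) * t ^ 2 / (8 * b ^ 2))) := by
  intro t ht
  have h1 := one_side μ n hn X hmeas hindep hident g hgmeas hgsym b hb hgb t ht
  have hgmeas' : Measurable (Function.uncurry (fun x y => -(g x y))) := by
    have : Function.uncurry (fun x y => -(g x y)) = fun p => -(Function.uncurry g p) := rfl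
    rw [this]; exact hgmeas.neg
  have h2 := one_side μ n hn X hmeas hindep hident (fun x y => -(g x y)) hgmeas'
    (fun x y => by show -(g x y) = -(g y x); rw [hgsym x y]) b hb
    (fun x y => by show |(-(g x y))| ≤ b; rw [abs_neg]; exact hgb x y) t ht
  have hneg1 : ∀ ω : Ω, (∑ p ∈ Finset.univ.filter (fun p : Fin n × Fin n => p.1 < p.2),
        -(g (X p.1 ω) (X p.2 ω)))
      = -(∑ p ∈ Finset.univ.filter (fun p : Fin n × Fin n => p.1 < p.2),
        g (X p.1 ω) (X p.2 ω)) := by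
    intro ω; rw [Finset.sum_neg_distrib]
  simp only [hneg1, mul_neg, integral_neg, sub_neg_eq_add, neg_add_eq_sub] at h2
  -- h2 now concerns the set {ω | t ≤ E - U ω}
  set D : Ω → ℝ := fun ω => (1 / (n.choose 2 : ℝ)) *
      (∑ p ∈ Finset.univ.filter (fun p : Fin n × Fin n => p.1 < p.2),
        g (X p.1 ω) (X p.2 ω))
    - ∫ ω', (1 / (n.choose 2 : ℝ)) *
        (∑ p ∈ Finset.univ.filter (fun p : Fin n × Fin n => p.1 < p.2),
          g (X p.1 ω') (X p.2 ω')) ∂μ with hD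
  have hsub : {ω | t < |D ω|} ⊆ {ω | t ≤ D ω} ∪ {ω | t ≤ -(D ω)} := by
    intro ω hω
    simp only [Set.mem_setOf_eq] at hω
    rcases lt_abs.mp hω with h | h
    · exact Or.inl h.le
    · exact Or.inr h.le
  have hA : μ {ω | t ≤ D ω} ≤ ENNReal.ofReal (Real.exp (-(n : ℝ) * t ^ 2 / (8 * b ^ 2))) := by
    rw [← ENNReal.ofReal_toReal (measure_ne_top μ _)]
    exact ENNReal.ofReal_le_ofReal h1
  have hB : μ {ω | t ≤ -(D ω)} ≤ ENNReal.ofReal (Real.exp (-(n : ℝ) * t ^ 2 / (8 * b ^ 2))) := by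
    have hset : {ω | t ≤ -(D ω)} = {ω | t ≤ (∫ ω', (1 / (n.choose 2 : ℝ)) *
        (∑ p ∈ Finset.univ.filter (fun p : Fin n × Fin n => p.1 < p.2),
          g (X p.1 ω') (X p.2 ω')) ∂μ)
        - (1 / (n.choose 2 : ℝ)) *
          (∑ p ∈ Finset.univ.filter (fun p : Fin n × Fin n => p.1 < p.2),
            g (X p.1 ω) (X p.2 ω))} := by
      ext ω
      simp only [Set.mem_setOf_eq, hD, neg_sub]
    rw [hset, ← ENNReal.ofReal_toReal (measure_ne_top μ _)]
    exact ENNReal.ofReal_le_ofReal h2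
  calc μ {ω | t < |D ω|} ≤ μ ({ω | t ≤ D ω} ∪ {ω | t ≤ -(D ω)}) := measure_mono hsub
    _ ≤ μ {ω | t ≤ D ω} + μ {ω | t ≤ -(D ω)} := measure_union_le _ _
    _ ≤ ENNReal.ofReal (Real.exp (-(n : ℝ) * t ^ 2 / (8 * b ^ 2)))
        + ENNReal.ofReal (Real.exp (-(n : ℝ) * t ^ 2 / (8 * b ^ 2))) := add_le_add hA hB
    _ = ENNReal.ofReal (2 * Real.exp (-(n : ℝ) * t ^ 2 / (8 * b ^ 2))) := by
      rw [← ENNReal.ofReal_add (Real.exp_pos _).le (Real.exp_pos _).le]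
      congr 1
      ring
end

section
/- Let X be Binomial(m, p) conditioned on nothing, and suppose mp < 1. Then ∑_{z = φ²+1}^{∞} P(X² ≥ z) ≤ 2(φ + 1/(1−mp)) · (mp)^{φ+1} / (1−mp), for any integer φ ≥ 1. -/
-- tail bound: P(X >= k) <= (m p)^k
lemma tail_bound (m k : ℕ) (p : ℝ) (hp0 : 0 < p) (hp1 : p < 1) :
    ∑ i ∈ (Finset.range (m + 1)).filter (fun i => k ≤ i),
      (m.choose i : ℝ) * p ^ i * (1 - p) ^ (m - i) ≤ ((m : ℝ) * p) ^ k := by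
  have h1p : (0:ℝ) ≤ 1 - p := by linarith
  rcases le_or_gt k m with hkm | hkm
  · have hfil : (Finset.range (m + 1)).filter (fun i => k ≤ i) = Finset.Ico k (m+1) := by
      ext i; simp [Finset.mem_filter, Finset.mem_Ico, and_comm, Nat.lt_succ_iff]
    rw [hfil, Finset.sum_Ico_eq_sum_range]
    have hstep : ∀ j ∈ Finset.range (m + 1 - k),
        (m.choose (k + j) : ℝ) * p ^ (k + j) * (1 - p) ^ (m - (k + j)) ≤
        ((m:ℝ)^k * p^k) * (((m-k).choose j : ℝ) * p ^ j * (1-p) ^ ((m-k) - j)) := by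
      intro j hj
      rw [Finset.mem_range] at hj
      have hkjm : k + j ≤ m := by omega
      have hchoose : (m.choose (k + j) : ℝ) ≤ (m.choose k : ℝ) * ((m-k).choose j : ℝ) := by
        have := Nat.choose_mul (n := m) (Nat.le_add_right k j)
        have hpos : 1 ≤ (k+j).choose k := Nat.choose_pos (Nat.le_add_right k j)
        have : m.choose (k+j) ≤ m.choose k * (m-k).choose (k+j-k) := by
          calc m.choose (k+j) ≤ m.choose (k+j) * (k+j).choose k :=
                Nat.le_mul_of_pos_right _ hpos
            _ = m.choose k * (m-k).choose (k+j-k) := Nat.choose_mul (Nat.le_add_right k j)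
        simpa [Nat.add_sub_cancel_left] using (Nat.cast_le (α := ℝ)).2 this
      have hck : (m.choose k : ℝ) ≤ (m:ℝ)^k := by
        exact_mod_cast Nat.cast_le.2 (Nat.choose_le_pow m k)
      have hmk : m - (k + j) = (m - k) - j := by omega
      rw [hmk, pow_add]
      have h0c : (0:ℝ) ≤ ((m-k).choose j : ℝ) := by positivity
      have h0 : (0:ℝ) ≤ p ^ k * p ^ j * (1-p)^((m-k)-j) := by positivity
      nlinarith [pow_pos hp0 k, pow_pos hp0 j, pow_nonneg h1p ((m-k)-j),
        mul_le_mul_of_nonneg_right hchoose h0,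
        mul_le_mul_of_nonneg_right hck (mul_nonneg (mul_nonneg h0c (le_of_lt (pow_pos hp0 j))) (pow_nonneg h1p ((m-k)-j)))]
    calc ∑ j ∈ Finset.range (m + 1 - k),
          (m.choose (k + j) : ℝ) * p ^ (k + j) * (1 - p) ^ (m - (k + j))
        ≤ ∑ j ∈ Finset.range (m + 1 - k),
          ((m:ℝ)^k * p^k) * (((m-k).choose j : ℝ) * p ^ j * (1-p) ^ ((m-k) - j)) :=
          Finset.sum_le_sum hstep
      _ = ((m:ℝ)^k * p^k) * ∑ j ∈ Finset.range ((m-k) + 1),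
          (((m-k).choose j : ℝ) * p ^ j * (1-p) ^ ((m-k) - j)) := by
          rw [← Finset.mul_sum, show m + 1 - k = (m-k) + 1 by omega]
      _ = ((m:ℝ)^k * p^k) * 1 := by
          congr 1
          calc ∑ j ∈ Finset.range ((m-k) + 1),
                (((m-k).choose j : ℝ) * p ^ j * (1-p) ^ ((m-k) - j))
              = (p + (1-p)) ^ (m-k) := by
                rw [add_pow]
                apply Finset.sum_congr rfl
                intro j hj; ring
            _ = 1 := by norm_num
      _ = ((m:ℝ) * p) ^ k := by rw [mul_pow]; ring
  · have : (Finset.range (m + 1)).filter (fun i => k ≤ i) = ∅ := by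
      apply Finset.filter_false_of_mem
      intro i hi; rw [Finset.mem_range] at hi; omega
    rw [this, Finset.sum_empty]
    positivity

-- geometric-ish identity
lemma geom_id (q : ℝ) (N n : ℕ) :
    (1 - q)^2 * ∑ k ∈ Finset.Ico N (N + n), (k : ℝ) * q ^ k =
      q ^ N * ((N:ℝ) * (1 - q) + q) - q ^ (N + n) * (((N:ℝ) + n) * (1 - q) + q) := by
  induction n with
  | zero => simp
  | succ n ih =>
    rw [show N + (n+1) = (N+n) + 1 by ring, Finset.sum_Ico_succ_top (by omega), mul_add, ih]
    push_cast
    ring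

lemma geom_sum_le (q : ℝ) (hq0 : 0 ≤ q) (hq1 : q < 1) (N M : ℕ) :
    ∑ k ∈ Finset.Icc N M, (k : ℝ) * q ^ k ≤ q ^ N * ((N:ℝ) * (1 - q) + q) / (1 - q)^2 := by
  have hq1' : (0:ℝ) < 1 - q := by linarith
  have hI : Finset.Icc N M = Finset.Ico N (N + (M + 1 - N)) := by
    ext x; simp only [Finset.mem_Icc, Finset.mem_Ico]; omega
  have hid := geom_id q N (M + 1 - N)
  rw [hI, ← sub_nonneg, div_sub' (by positivity)]
  apply div_nonneg _ (by positivity)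
  have hT : (0:ℝ) ≤ q ^ (N + (M + 1 - N)) * ((↑N + ↑(M + 1 - N)) * (1 - q) + q) := by
    apply mul_nonneg (pow_nonneg hq0 _)
    have : (0:ℝ) ≤ (N:ℝ) := Nat.cast_nonneg N
    have : (0:ℝ) ≤ ((M + 1 - N : ℕ):ℝ) := Nat.cast_nonneg _
    nlinarith
  linarith [hid]

theorem stmt_13 (m : ℕ) (p : ℝ) (hp0 : 0 < p) (hp1 : p < 1)
    (hmp : (m : ℝ) * p < 1) (φ : ℕ) (hφ : 1 ≤ φ) :
    ∑' z : ℕ, (if φ ^ 2 + 1 ≤ z then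
        (∑ i ∈ (Finset.range (m + 1)).filter (fun i => z ≤ i ^ 2),
          (m.choose i : ℝ) * p ^ i * (1 - p) ^ (m - i))
      else 0)
      ≤ 2 * ((φ : ℝ) + 1 / (1 - (m : ℝ) * p)) * ((m : ℝ) * p) ^ (φ + 1)
          / (1 - (m : ℝ) * p) := by
  set q : ℝ := (m : ℝ) * p with hq
  have hq0 : 0 ≤ q := mul_nonneg (Nat.cast_nonneg m) hp0.le
  have hq1 : q < 1 := hmp
  have h1q : (0:ℝ) < 1 - q := by linarith
  have h1p : (0:ℝ) ≤ 1 - p := by linarith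
  set f : ℕ → ℝ := fun z => (if φ ^ 2 + 1 ≤ z then
        (∑ i ∈ (Finset.range (m + 1)).filter (fun i => z ≤ i ^ 2),
          (m.choose i : ℝ) * p ^ i * (1 - p) ^ (m - i))
      else 0) with hf
  have hfnn : ∀ z, 0 ≤ f z := by
    intro z
    rw [hf]
    dsimp only
    split
    · apply Finset.sum_nonneg
      intro i _
      positivity
    · exact le_rfl
  apply Real.tsum_le_of_sum_range_le hfnn
  intro n
  set s : ℕ → ℕ := fun z => Nat.sqrt (z - 1) + 1 with hs
  set g : ℕ → ℝ := fun z => if φ ^ 2 + 1 ≤ z then q ^ (s z) else 0 with hg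
  have hfg : ∀ z, f z ≤ g z := by
    intro z
    rw [hf, hg]
    dsimp only
    split
    · rename_i hz
      calc ∑ i ∈ (Finset.range (m + 1)).filter (fun i => z ≤ i ^ 2),
            (m.choose i : ℝ) * p ^ i * (1 - p) ^ (m - i)
          ≤ ∑ i ∈ (Finset.range (m + 1)).filter (fun i => s z ≤ i),
            (m.choose i : ℝ) * p ^ i * (1 - p) ^ (m - i) := by
            apply Finset.sum_le_sum_of_subset_of_nonneg
            · intro i hi
              rw [Finset.mem_filter] at hi ⊢
              refine ⟨hi.1, ?_⟩
              have hz1 : 0 < z := lt_of_lt_of_le (Nat.succ_pos _) hz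
              have h2 : z - 1 < i ^ 2 := lt_of_lt_of_le (Nat.sub_lt hz1 one_pos) hi.2
              have h3 := Nat.sqrt_lt'.mpr h2
              show Nat.sqrt (z - 1) + 1 ≤ i
              omega
            · intro i _ _
              positivity
        _ ≤ q ^ (s z) := tail_bound m (s z) p hp0 hp1
    · exact le_rfl
  calc ∑ z ∈ Finset.range n, f z ≤ ∑ z ∈ Finset.range n, g z :=
        Finset.sum_le_sum (fun z _ => hfg z)
    _ = ∑ z ∈ (Finset.range n).filter (fun z => φ ^ 2 + 1 ≤ z), q ^ (s z) := by
        rw [Finset.sum_filter]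
    _ = ∑ k ∈ Finset.Icc (φ + 1) n,
          ∑ z ∈ ((Finset.range n).filter (fun z => φ ^ 2 + 1 ≤ z)).filter (fun z => s z = k),
          q ^ (s z) := by
        rw [Finset.sum_fiberwise_of_maps_to]
        intro z hz
        rw [Finset.mem_filter, Finset.mem_range] at hz
        rw [Finset.mem_Icc]
        have hz1 : 1 ≤ z := le_trans (Nat.le_add_left 1 (φ^2)) hz.2
        constructor
        · have hφz : φ ^ 2 ≤ z - 1 := by
            have := hz.2; omega
          have h4 : φ ≤ Nat.sqrt (z - 1) := Nat.le_sqrt'.mpr hφz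
          show φ + 1 ≤ Nat.sqrt (z - 1) + 1
          omega
        · have h1 : Nat.sqrt (z - 1) ≤ z - 1 := Nat.sqrt_le_self _
          have h2 := hz.1
          show Nat.sqrt (z - 1) + 1 ≤ n
          omega
    _ ≤ ∑ k ∈ Finset.Icc (φ + 1) n, 2 * (k : ℝ) * q ^ k := by
        apply Finset.sum_le_sum
        intro k hk
        rw [Finset.mem_Icc] at hk
        set F := ((Finset.range n).filter (fun z => φ ^ 2 + 1 ≤ z)).filter
            (fun z => s z = k) with hF
        have hc : ∀ z ∈ F, q ^ (s z) = q ^ k := by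
          intro z hz
          rw [hF, Finset.mem_filter] at hz
          rw [hz.2]
        rw [Finset.sum_congr rfl hc, Finset.sum_const, nsmul_eq_mul]
        have hcard : F.card ≤ 2 * k := by
          have hsub : F ⊆ Finset.Ioc ((k-1)^2) (k^2) := by
            intro z hz
            rw [hF, Finset.mem_filter, Finset.mem_filter, Finset.mem_range] at hz
            rw [Finset.mem_Ioc]
            have hz1 : 1 ≤ z := le_trans (Nat.le_add_left 1 (φ^2)) hz.1.2
            have hsz : Nat.sqrt (z - 1) + 1 = k := hz.2
            have hsq : Nat.sqrt (z - 1) = k - 1 := by omega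
            have h1 : (k-1)^2 ≤ z - 1 := by rw [← hsq]; exact Nat.sqrt_le' _
            have h2 : z - 1 < (Nat.sqrt (z-1) + 1)^2 := Nat.lt_succ_sqrt' _
            rw [hsz] at h2
            exact ⟨lt_of_le_of_lt h1 (Nat.sub_lt (by omega) one_pos),
              Nat.le_of_pred_lt h2⟩
          have h2k : k ^ 2 - (k-1)^2 ≤ 2 * k := by
            obtain ⟨k', rfl⟩ : ∃ k', k = k' + 1 := ⟨k - 1, by omega⟩
            have h1 : (k' + 1)^2 = k'^2 + 2*k' + 1 := by ring
            have h2 : k' + 1 - 1 = k' := by omega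
            rw [h2]
            omega
          calc F.card ≤ (Finset.Ioc ((k-1)^2) (k^2)).card := Finset.card_le_card hsub
            _ = k^2 - (k-1)^2 := by rw [Nat.card_Ioc]
            _ ≤ 2 * k := h2k
        calc (F.card : ℝ) * q ^ k ≤ (2 * (k:ℝ)) * q ^ k := by
              apply mul_le_mul_of_nonneg_right _ (pow_nonneg hq0 k)
              exact_mod_cast Nat.cast_le.2 hcard
          _ = 2 * (k : ℝ) * q ^ k := by ring
    _ = 2 * ∑ k ∈ Finset.Icc (φ + 1) n, (k : ℝ) * q ^ k := by
        rw [Finset.mul_sum]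
        apply Finset.sum_congr rfl
        intro k _; ring
    _ ≤ 2 * (q ^ (φ+1) * (((φ:ℝ)+1) * (1 - q) + q) / (1 - q)^2) := by
        apply mul_le_mul_of_nonneg_left _ (by norm_num)
        have h := geom_sum_le q hq0 hq1 (φ+1) n
        exact h.trans_eq (by push_cast; ring)
    _ = 2 * ((φ : ℝ) + 1 / (1 - q)) * q ^ (φ + 1) / (1 - q) := by
        field_simp
        ring
end
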